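/- With the assumptions on μ, ν, and parameters 0 ≤ α ≤ ρ (ρ > 0), 0 < γ < σ ≤ 1, if ν_n ≥ ν_{n+1} eventually and V(∞) = ∞, then for all x > 0, ω_δ(σ,x) > k(σ)(1 − θ_δ(σ,x)), where 0 < θ_δ(σ,x) ≤ L (U^δ(x) V_{n₀})^{σ−γ}/(k(σ)(σ−γ)) = O((U(x))^{δ(σ−γ)}) for some constant L > 0. -/

import Mathlib

noncomputable def Ufun13 (μ : ℝ → ℝ) (x : ℝ) : ℝ := ∫ t in Set.Ioc (0:ℝ) x, μ t

noncomputable def h13 (ρ α γ : ℝ) (u : ℝ) : ℝ :=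
  (2 / (Real.exp (ρ * u ^ γ) - Real.exp (-(ρ * u ^ γ)))) / Real.exp (α * u ^ γ)

/-- k(σ) = ∫₀^∞ csch(ρu^γ)/e^{αu^γ} u^{σ−1} du. -/
noncomputable def k13 (ρ α γ σ : ℝ) : ℝ := ∫ u in Set.Ioi (0:ℝ), h13 ρ α γ u * u ^ (σ - 1)

/-- θ_δ(σ,x) = (1/k(σ)) ∫₀^{U^δ(x) V_{n₀}} csch(ρu^γ)/e^{αu^γ} u^{σ−1} du. -/
noncomputable def θ13 (μ : ℝ → ℝ) (ρ α γ σ δ : ℝ) (c : ℝ) (x : ℝ) : ℝ :=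
  (1 / k13 ρ α γ σ) * ∫ u in Set.Ioo (0:ℝ) ((Ufun13 μ x) ^ δ * c), h13 ρ α γ u * u ^ (σ - 1)

open Real Set MeasureTheory Filter Topology ENNReal

namespace Stmt13Aux

/-- The integrand. -/
noncomputable def F (ρ α γ σ : ℝ) (u : ℝ) : ℝ := h13 ρ α γ u * u ^ (σ - 1)

variable {ρ α γ σ : ℝ}

lemma expsub_pos {t : ℝ} (ht : 0 < t) : 0 < Real.exp t - Real.exp (-t) :=
  sub_pos.mpr (Real.exp_lt_exp.mpr (by linarith))

lemma h13_pos (hρ : 0 < ρ) (hγ : 0 < γ) {u : ℝ} (hu : 0 < u) : 0 < h13 ρ α γ u := by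
  have ht : 0 < ρ * u ^ γ := mul_pos hρ (Real.rpow_pos_of_pos hu γ)
  exact div_pos (div_pos two_pos (expsub_pos ht)) (Real.exp_pos _)

lemma F_pos (hρ : 0 < ρ) (hγ : 0 < γ) {u : ℝ} (hu : 0 < u) : 0 < F ρ α γ σ u :=
  mul_pos (h13_pos hρ hγ hu) (Real.rpow_pos_of_pos hu _)

lemma h13_anti (hα : 0 ≤ α) (hρ : 0 < ρ) (hγ : 0 < γ) {a b : ℝ} (ha : 0 < a) (hab : a < b) :
    h13 ρ α γ b < h13 ρ α γ a := by
  have hg : a ^ γ < b ^ γ := Real.rpow_lt_rpow ha.le hab hγ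
  have hta : 0 < ρ * a ^ γ := mul_pos hρ (Real.rpow_pos_of_pos ha γ)
  have htab : ρ * a ^ γ < ρ * b ^ γ := by nlinarith
  have hA : Real.exp (ρ * a ^ γ) - Real.exp (-(ρ * a ^ γ))
      < Real.exp (ρ * b ^ γ) - Real.exp (-(ρ * b ^ γ)) := by
    have h1 := Real.exp_lt_exp.mpr htab
    have h2 := Real.exp_lt_exp.mpr (neg_lt_neg htab)
    linarith
  have hAa := expsub_pos hta
  have hE : Real.exp (α * a ^ γ) ≤ Real.exp (α * b ^ γ) :=
    Real.exp_le_exp.mpr (by nlinarith)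
  unfold h13
  have hAb : 0 < Real.exp (ρ * b ^ γ) - Real.exp (-(ρ * b ^ γ)) := expsub_pos (hta.trans htab)
  calc 2 / (Real.exp (ρ * b ^ γ) - Real.exp (-(ρ * b ^ γ))) / Real.exp (α * b ^ γ)
      ≤ 2 / (Real.exp (ρ * b ^ γ) - Real.exp (-(ρ * b ^ γ))) / Real.exp (α * a ^ γ) :=
        div_le_div_of_nonneg_left (by positivity) (Real.exp_pos _) hE
    _ < 2 / (Real.exp (ρ * a ^ γ) - Real.exp (-(ρ * a ^ γ))) / Real.exp (α * a ^ γ) := by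
        apply div_lt_div_of_pos_right _ (Real.exp_pos _)
        exact div_lt_div_of_pos_left two_pos hAa hA

lemma F_anti (hα : 0 ≤ α) (hρ : 0 < ρ) (hγ : 0 < γ) (hσ : σ ≤ 1) {a b : ℝ}
    (ha : 0 < a) (hab : a < b) : F ρ α γ σ b < F ρ α γ σ a := by
  have h1 : b ^ (σ - 1) ≤ a ^ (σ - 1) :=
    Real.rpow_le_rpow_of_nonpos ha hab.le (by linarith)
  have h2 : h13 ρ α γ b < h13 ρ α γ a := h13_anti hα hρ hγ ha hab
  have hb : 0 < b := ha.trans hab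
  have := Real.rpow_pos_of_pos hb (σ - 1)
  have := h13_pos (α := α) hρ hγ hb
  unfold F
  nlinarith [h13_pos (α := α) hρ hγ ha]

lemma F_anti_le (hα : 0 ≤ α) (hρ : 0 < ρ) (hγ : 0 < γ) (hσ : σ ≤ 1) {a b : ℝ}
    (ha : 0 < a) (hab : a ≤ b) : F ρ α γ σ b ≤ F ρ α γ σ a := by
  rcases eq_or_lt_of_le hab with rfl | h
  · exact le_rfl
  · exact (F_anti hα hρ hγ hσ ha h).le

lemma F_le (hα : 0 ≤ α) (hρ : 0 < ρ) (hγ : 0 < γ) {u : ℝ} (hu : 0 < u) :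
    F ρ α γ σ u ≤ ρ⁻¹ * u ^ (σ - γ - 1) := by
  have hug : 0 < u ^ γ := Real.rpow_pos_of_pos hu γ
  have ht : 0 < ρ * u ^ γ := mul_pos hρ hug
  have hsinh : ρ * u ^ γ ≤ Real.sinh (ρ * u ^ γ) := Real.self_le_sinh_iff.mpr ht.le
  have hsinh_eq : Real.sinh (ρ * u ^ γ) = (Real.exp (ρ * u ^ γ) - Real.exp (-(ρ * u ^ γ))) / 2 :=
    Real.sinh_eq _
  have h1 : h13 ρ α γ u ≤ (ρ * u ^ γ)⁻¹ := by
    have hE : 1 ≤ Real.exp (α * u ^ γ) := Real.one_le_exp (by positivity)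
    have hA : 2 * (ρ * u ^ γ) ≤ Real.exp (ρ * u ^ γ) - Real.exp (-(ρ * u ^ γ)) := by
      rw [hsinh_eq] at hsinh; linarith
    have hApos := expsub_pos ht
    unfold h13
    calc 2 / (Real.exp (ρ * u ^ γ) - Real.exp (-(ρ * u ^ γ))) / Real.exp (α * u ^ γ)
        ≤ 2 / (Real.exp (ρ * u ^ γ) - Real.exp (-(ρ * u ^ γ))) / 1 := by
          gcongr <;> positivity
      _ = 2 / (Real.exp (ρ * u ^ γ) - Real.exp (-(ρ * u ^ γ))) := by ring
      _ ≤ 2 / (2 * (ρ * u ^ γ)) := by gcongr <;> positivity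
      _ = (ρ * u ^ γ)⁻¹ := by field_simp
  have h2 : (ρ * u ^ γ)⁻¹ * u ^ (σ - 1) = ρ⁻¹ * u ^ (σ - γ - 1) := by
    rw [mul_inv, show σ - γ - 1 = -γ + (σ - 1) by ring, Real.rpow_add hu,
      Real.rpow_neg hu.le, mul_assoc]
  calc F ρ α γ σ u ≤ (ρ * u ^ γ)⁻¹ * u ^ (σ - 1) := by
        unfold F; exact mul_le_mul_of_nonneg_right h1 (Real.rpow_nonneg hu.le _)
    _ = ρ⁻¹ * u ^ (σ - γ - 1) := h2

lemma rpow_contOn (γ : ℝ) : ContinuousOn (fun u : ℝ => u ^ γ) (Ioi 0) := by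
  intro x hx
  exact (Real.continuousAt_rpow_const x γ (Or.inl (ne_of_gt hx))).continuousWithinAt

lemma F_contOn (hρ : 0 < ρ) (hγ : 0 < γ) : ContinuousOn (F ρ α γ σ) (Ioi 0) := by
  have hg : ContinuousOn (fun u : ℝ => u ^ γ) (Ioi 0) := rpow_contOn γ
  have h1 : ContinuousOn (fun u : ℝ =>
      Real.exp (ρ * u ^ γ) - Real.exp (-(ρ * u ^ γ))) (Ioi 0) :=
    ((Real.continuous_exp.comp_continuousOn (hg.const_smul ρ)).sub
      (Real.continuous_exp.comp_continuousOn ((hg.const_smul ρ).neg)))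
  have h2 : ContinuousOn (fun u : ℝ =>
      2 / (Real.exp (ρ * u ^ γ) - Real.exp (-(ρ * u ^ γ)))) (Ioi 0) :=
    continuousOn_const.div h1 (fun x hx =>
      ne_of_gt (expsub_pos (mul_pos hρ (Real.rpow_pos_of_pos hx γ))))
  have h3 : ContinuousOn (fun u : ℝ => Real.exp (α * u ^ γ)) (Ioi 0) :=
    Real.continuous_exp.comp_continuousOn (hg.const_smul α)
  exact ((h2.div h3 (fun x _ => ne_of_gt (Real.exp_pos _))).mul (rpow_contOn (σ - 1)))

lemma G_integrable (hρ : 0 < ρ) (hγ : 0 < γ) (hγσ : γ < σ) :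
    IntegrableOn (fun u : ℝ => u ^ (σ - 1) * Real.exp (-ρ * u ^ γ)) (Ioi 0) := by
  set s : ℝ := (σ - γ) / γ with hs
  have hf : IntegrableOn (fun y : ℝ => y ^ s * Real.exp (-ρ * y)) (Ioi 0) := by
    have := integrableOn_rpow_mul_exp_neg_mul_rpow
      (s := s) (p := 1) (b := ρ)
      (by have : 0 < s := div_pos (by linarith) hγ; linarith) one_pos hρ
    refine this.congr_fun (fun y hy => ?_) measurableSet_Ioi
    beta_reduce
    rw [Real.rpow_one]
  have h2 := (integrableOn_Ioi_comp_rpow_iff'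
    (fun y : ℝ => y ^ s * Real.exp (-ρ * y)) (ne_of_gt hγ)).mpr hf
  refine h2.congr_fun (fun x hx => ?_) measurableSet_Ioi
  have hx0 : (0:ℝ) < x := hx
  have h3 : (x ^ γ) ^ s = x ^ (σ - γ) := by
    rw [← Real.rpow_mul hx0.le]
    rw [hs, mul_div_cancel₀ _ (ne_of_gt hγ)]
  beta_reduce
  rw [smul_eq_mul, h3]
  rw [show x ^ (γ - 1) * (x ^ (σ - γ) * Real.exp (-ρ * x ^ γ))
      = (x ^ (γ - 1) * x ^ (σ - γ)) * Real.exp (-ρ * x ^ γ) by ring,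
    ← Real.rpow_add hx0, show γ - 1 + (σ - γ) = σ - 1 by ring]

lemma F_integrableOn (hα : 0 ≤ α) (hρ : 0 < ρ) (hγ : 0 < γ) (hγσ : γ < σ) (hσ : σ ≤ 1) :
    IntegrableOn (F ρ α γ σ) (Ioi 0) := by
  have hmeas : AEStronglyMeasurable (F ρ α γ σ) (volume.restrict (Ioi (0:ℝ))) :=
    (F_contOn hρ hγ).aestronglyMeasurable measurableSet_Ioi
  have h01 : IntegrableOn (F ρ α γ σ) (Ioc 0 1) := by
    have hg : IntegrableOn (fun u : ℝ => ρ⁻¹ * u ^ (σ - γ - 1)) (Ioc (0:ℝ) 1) := by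
      have := intervalIntegral.intervalIntegrable_rpow' (a := 0) (b := 1)
        (r := σ - γ - 1) (by linarith)
      exact ((intervalIntegrable_iff_integrableOn_Ioc_of_le (by norm_num)).mp this).const_mul _
    refine Integrable.mono' hg (hmeas.mono_set Ioc_subset_Ioi_self) ?_
    refine (ae_restrict_iff' measurableSet_Ioc).mpr (ae_of_all _ fun u hu => ?_)
    rw [Real.norm_eq_abs, abs_of_pos (F_pos hρ hγ hu.1)]
    exact F_le hα hρ hγ hu.1
  have h1i : IntegrableOn (F ρ α γ σ) (Ioi 1) := by
    set C : ℝ := 2 / (1 - Real.exp (-(2*ρ))) with hC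
    have hCden : 0 < 1 - Real.exp (-(2*ρ)) := by
      have : Real.exp (-(2*ρ)) < 1 := Real.exp_lt_one_iff.mpr (by linarith)
      linarith
    have hCpos : 0 < C := div_pos two_pos hCden
    have hg : IntegrableOn (fun u : ℝ => C * (u ^ (σ-1) * Real.exp (-ρ * u ^ γ))) (Ioi 1) :=
      ((G_integrable hρ hγ hγσ).mono_set (Ioi_subset_Ioi (by norm_num))).const_mul C
    refine Integrable.mono' hg (hmeas.mono_set (Ioi_subset_Ioi (by norm_num))) ?_
    refine (ae_restrict_iff' measurableSet_Ioi).mpr (ae_of_all _ fun u hu => ?_)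
    have hu1 : (1:ℝ) < u := hu
    have hu0 : (0:ℝ) < u := by linarith
    rw [Real.norm_eq_abs, abs_of_pos (F_pos hρ hγ hu0)]
    have hug : (1:ℝ) ≤ u ^ γ := by
      have := Real.rpow_le_rpow (by norm_num) hu1.le hγ.le
      rwa [Real.one_rpow] at this
    set t : ℝ := ρ * u ^ γ with htdef
    have htρ : ρ ≤ t := by nlinarith
    have ht0 : 0 < t := lt_of_lt_of_le hρ htρ
    have hA : 0 < Real.exp t - Real.exp (-t) := expsub_pos ht0
    have hE : 0 < Real.exp (-t) := Real.exp_pos _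
    have hEA : Real.exp (-t) * (Real.exp t - Real.exp (-t))
        = 1 - Real.exp (-t) * Real.exp (-t) := by
      rw [mul_sub, ← Real.exp_add]
      simp
    have hsq : Real.exp (-t) * Real.exp (-t) ≤ Real.exp (-(2*ρ)) := by
      rw [← Real.exp_add]
      exact Real.exp_le_exp.mpr (by linarith)
    have hkey : 2 / (Real.exp t - Real.exp (-t)) ≤ C * Real.exp (-t) := by
      rw [div_le_iff₀ hA]
      have h2 : C * (1 - Real.exp (-(2*ρ))) = 2 := by
        rw [hC, div_mul_cancel₀ _ (ne_of_gt hCden)]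
      nlinarith
    have hh13 : h13 ρ α γ u ≤ C * Real.exp (-ρ * u ^ γ) := by
      have hEx : 1 ≤ Real.exp (α * u ^ γ) := Real.one_le_exp (by positivity)
      have : h13 ρ α γ u ≤ 2 / (Real.exp t - Real.exp (-t)) := by
        unfold h13
        rw [htdef]
        exact div_le_self (by positivity) hEx
      refine this.trans ?_
      rw [show -ρ * u ^ γ = -t by rw [htdef]; ring]
      exact hkey
    calc F ρ α γ σ u = h13 ρ α γ u * u ^ (σ - 1) := rfl
      _ ≤ (C * Real.exp (-ρ * u ^ γ)) * u ^ (σ - 1) :=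
          mul_le_mul_of_nonneg_right hh13 (Real.rpow_nonneg hu0.le _)
      _ = C * (u ^ (σ-1) * Real.exp (-ρ * u ^ γ)) := by ring
  have : Ioc (0:ℝ) 1 ∪ Ioi 1 = Ioi 0 := Ioc_union_Ioi_eq_Ioi (by norm_num)
  rw [← this]
  exact h01.union h1i

section GenInt

variable {G : ℝ → ℝ}

lemma int_Ioc_le (hFi : IntegrableOn G (Ioi 0))
    (hanti : ∀ {s t : ℝ}, 0 < s → s ≤ t → G t ≤ G s)
    {a b c : ℝ} (hc : 0 < c) (hca : c ≤ a) (hab : a ≤ b) :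
    ∫ u in Ioc a b, G u ≤ G c * (b - a) := by
  have hsub : Ioc a b ⊆ Ioi (0:ℝ) := fun t ht => lt_of_lt_of_le hc (hca.trans ht.1.le)
  have h1 : ∫ u in Ioc a b, G u ≤ ∫ _u in Ioc a b, G c := by
    refine setIntegral_mono_on (hFi.mono_set hsub)
      (integrableOn_const measure_Ioc_lt_top.ne) measurableSet_Ioc
      (fun t ht => hanti hc (hca.trans ht.1.le))
  have h2 : ∫ _u in Ioc a b, G c = G c * (b - a) := by
    rw [setIntegral_const, measureReal_def, Real.volume_Ioc, ENNReal.toReal_ofReal (by linarith), smul_eq_mul,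
      mul_comm]
  linarith

lemma int_Ioc_ge (hFi : IntegrableOn G (Ioi 0))
    (hanti : ∀ {s t : ℝ}, 0 < s → s ≤ t → G t ≤ G s)
    {a b c : ℝ} (ha : 0 ≤ a) (hab : a ≤ b) (hbc : b ≤ c) :
    G c * (b - a) ≤ ∫ u in Ioc a b, G u := by
  have hsub : Ioc a b ⊆ Ioi (0:ℝ) := fun t ht => lt_of_le_of_lt ha ht.1
  have h1 : ∫ _u in Ioc a b, G c ≤ ∫ u in Ioc a b, G u := by
    refine setIntegral_mono_on
      (integrableOn_const measure_Ioc_lt_top.ne) (hFi.mono_set hsub)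
      measurableSet_Ioc (fun t ht => hanti (lt_of_le_of_lt ha ht.1) (ht.2.trans hbc))
  have h2 : ∫ _u in Ioc a b, G c = G c * (b - a) := by
    rw [setIntegral_const, measureReal_def, Real.volume_Ioc, ENNReal.toReal_ofReal (by linarith), smul_eq_mul,
      mul_comm]
  linarith

lemma int_Ioc_split (hFi : IntegrableOn G (Ioi 0))
    {a b c : ℝ} (h0 : 0 ≤ a) (hab : a ≤ b) (hbc : b ≤ c) :
    ∫ u in Ioc a c, G u = (∫ u in Ioc a b, G u) + ∫ u in Ioc b c, G u := by
  rw [← Ioc_union_Ioc_eq_Ioc hab hbc, setIntegral_union (Ioc_disjoint_Ioc_of_le le_rfl) measurableSet_Ioc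
    (hFi.mono_set (fun t ht => lt_of_le_of_lt h0 ht.1))
    (hFi.mono_set (fun t ht => lt_of_le_of_lt h0 (lt_of_le_of_lt hab ht.1)))]

lemma int_Ioi_split (hFi : IntegrableOn G (Ioi 0))
    {a b : ℝ} (h0 : 0 ≤ a) (hab : a ≤ b) :
    ∫ u in Ioi a, G u = (∫ u in Ioc a b, G u) + ∫ u in Ioi b, G u := by
  rw [← Ioc_union_Ioi_eq_Ioi hab, setIntegral_union Ioc_disjoint_Ioi_same measurableSet_Ioi
    (hFi.mono_set (fun t ht => lt_of_le_of_lt h0 ht.1))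
    (hFi.mono_set (fun t ht => lt_of_le_of_lt h0 (lt_of_le_of_lt hab ht)))]

lemma int_Ioc_lt (hFi : IntegrableOn G (Ioi 0))
    (hanti : ∀ {s t : ℝ}, 0 < s → s ≤ t → G t ≤ G s)
    (hanti' : ∀ {s t : ℝ}, 0 < s → s < t → G t < G s)
    {a b c : ℝ} (hc : 0 < c) (hca : c ≤ a) (hab : a < b) :
    ∫ u in Ioc a b, G u < G c * (b - a) := by
  set m : ℝ := (a + b) / 2 with hm
  have ham : a < m := by rw [hm]; linarith
  have hmb : m < b := by rw [hm]; linarith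
  have h1 : ∫ u in Ioc a b, G u = (∫ u in Ioc a m, G u) + ∫ u in Ioc m b, G u :=
    int_Ioc_split hFi (by linarith) ham.le hmb.le
  have h2 : ∫ u in Ioc a m, G u ≤ G c * (m - a) := int_Ioc_le hFi hanti hc hca ham.le
  have h3 : ∫ u in Ioc m b, G u ≤ G m * (b - m) :=
    int_Ioc_le hFi hanti (by linarith) le_rfl hmb.le
  have h4 : G m < G c := hanti' hc (lt_of_le_of_lt hca ham)
  nlinarith

lemma tendsto_setInt {f : ℝ → ℝ} {a : ℝ} {s : ℕ → ℝ} (hs : Monotone s)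
    (hst : Tendsto s atTop atTop) (hf : IntegrableOn f (Ioi a)) :
    Tendsto (fun N => ∫ u in Ioc a (s N), f u) atTop (𝓝 (∫ u in Ioi a, f u)) := by
  have hU : ⋃ N, Ioc a (s N) = Ioi a := by
    ext t
    simp only [mem_iUnion, mem_Ioc, mem_Ioi]
    constructor
    · rintro ⟨n, h1, _⟩; exact h1
    · intro h
      obtain ⟨n, hn⟩ := (hst.eventually_ge_atTop t).exists
      exact ⟨n, h, hn⟩
  have := tendsto_setIntegral_of_monotone (fun n : ℕ => measurableSet_Ioc)
    (fun m n hmn => Ioc_subset_Ioc_right (hs hmn)) (hU ▸ hf)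
  rwa [hU] at this

lemma int_rpow_Ioo {b r : ℝ} (hb : 0 ≤ b) (hr : -1 < r) :
    ∫ u in Ioo (0:ℝ) b, u ^ r = b ^ (r+1) / (r+1) := by
  rw [← integral_Ioc_eq_integral_Ioo, ← intervalIntegral.integral_of_le hb,
    integral_rpow (Or.inl hr),
    Real.zero_rpow (by linarith : r + 1 ≠ 0), sub_zero]

end GenInt

lemma k13_eq : k13 ρ α γ σ = ∫ u in Ioi (0:ℝ), F ρ α γ σ u := rfl

lemma k13_pos (hα : 0 ≤ α) (hρ : 0 < ρ) (hγ : 0 < γ) (hγσ : γ < σ) (hσ : σ ≤ 1) :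
    0 < k13 ρ α γ σ := by
  rw [k13_eq]
  have hFi := F_integrableOn hα hρ hγ hγσ hσ
  have hae : 0 ≤ᵐ[volume.restrict (Ioi (0:ℝ))] F ρ α γ σ :=
    (ae_restrict_iff' measurableSet_Ioi).mpr (ae_of_all _ fun u hu => (F_pos hρ hγ hu).le)
  refine (setIntegral_pos_iff_support_of_nonneg_ae hae hFi).mpr ?_
  have hsub : Ioi (0:ℝ) ⊆ Function.support (F ρ α γ σ) ∩ Ioi 0 :=
    fun u hu => ⟨ne_of_gt (F_pos hρ hγ hu), hu⟩
  calc (0:ℝ≥0∞) < volume (Ioi (0:ℝ)) := by simp [Real.volume_Ioi]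
    _ ≤ volume (Function.support (F ρ α γ σ) ∩ Ioi 0) := measure_mono hsub

lemma term_eq {U V w : ℝ} (hU : 0 < U) (hV : 0 < V) (δ : ℝ) :
    F ρ α γ σ (U ^ δ * V) * (U ^ δ * w)
      = h13 ρ α γ (U ^ δ * V) * (U ^ (δ * σ) * w / V ^ (1 - σ)) := by
  have hUd : (0:ℝ) < U ^ δ := Real.rpow_pos_of_pos hU δ
  have h1 : (U ^ δ) ^ (σ - 1) = U ^ (δ * (σ - 1)) := (Real.rpow_mul hU.le δ (σ - 1)).symm
  have h2 : U ^ (δ * (σ - 1)) * U ^ δ = U ^ (δ * σ) := by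
    rw [← Real.rpow_add hU]
    congr 1
    ring
  have h3 : V ^ (σ - 1) = (V ^ (1 - σ))⁻¹ := by
    rw [← Real.rpow_neg hV.le, show -(1-σ) = σ - 1 by ring]
  unfold F
  rw [Real.mul_rpow hUd.le hV.le, h1, h3, div_eq_mul_inv, ← h2]
  ring

end Stmt13Aux

open Stmt13Aux

/-- Lemma 3(i): ω_δ(σ,x) > k(σ)(1 − θ_δ(σ,x)) with
0 < θ_δ(σ,x) ≤ L (U^δ(x)V_{n₀})^{σ−γ}/(k(σ)(σ−γ)) for some L > 0. -/
theorem stmt13 (μ : ℝ → ℝ) (ν Vt : ℕ → ℝ) (σ γ α ρ δ : ℝ) (n₀ : ℕ) (hn₀ : 1 ≤ n₀)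
    (hμc : ContinuousOn μ (Set.Ioi 0)) (hμpos : ∀ x : ℝ, 0 < x → 0 < μ x)
    (hμint : ∀ x : ℝ, 0 < x → MeasureTheory.IntegrableOn μ (Set.Ioc 0 x))
    (hν : ∀ n : ℕ, 1 ≤ n → 0 < ν n)
    (hmono : ∀ n : ℕ, n₀ ≤ n → ν (n + 1) ≤ ν n)
    (hVt : ∀ n : ℕ, 1 ≤ n →
      (∑ j ∈ Finset.Icc 1 n, ν j) - ν n / 2 ≤ Vt n ∧ Vt n ≤ ∑ j ∈ Finset.Icc 1 n, ν j)
    (hdiv : Filter.Tendsto (fun n : ℕ => ∑ j ∈ Finset.Icc 1 n, ν j)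
      Filter.atTop Filter.atTop)
    (hα : 0 ≤ α) (hαρ : α ≤ ρ) (hρ : 0 < ρ)
    (hγ : 0 < γ) (hγσ : γ < σ) (hσ : σ ≤ 1) (hδ : δ = 1 ∨ δ = -1) :
    ∃ L : ℝ, 0 < L ∧ ∀ x : ℝ, 0 < x →
      k13 ρ α γ σ * (1 - θ13 μ ρ α γ σ δ (∑ j ∈ Finset.Icc 1 n₀, ν j) x)
        < (∑' n : ℕ,
            h13 ρ α γ ((Ufun13 μ x) ^ δ * Vt (n + 1))
              * ((Ufun13 μ x) ^ (δ * σ) * ν (n + 1) / Vt (n + 1) ^ (1 - σ))) ∧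
      0 < θ13 μ ρ α γ σ δ (∑ j ∈ Finset.Icc 1 n₀, ν j) x ∧
      θ13 μ ρ α γ σ δ (∑ j ∈ Finset.Icc 1 n₀, ν j) x
        ≤ L * ((Ufun13 μ x) ^ δ * ∑ j ∈ Finset.Icc 1 n₀, ν j) ^ (σ - γ)
            / (k13 ρ α γ σ * (σ - γ)) := by
  refine ⟨ρ⁻¹, by positivity, fun x hx => ?_⟩
  have hU : 0 < Ufun13 μ x := by
    have hae : 0 ≤ᵐ[volume.restrict (Ioc (0:ℝ) x)] μ :=
      (ae_restrict_iff' measurableSet_Ioc).mpr (ae_of_all _ fun u hu => (hμpos u hu.1).le)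
    refine (setIntegral_pos_iff_support_of_nonneg_ae hae (hμint x hx)).mpr ?_
    have hsub : Ioc (0:ℝ) x ⊆ Function.support μ ∩ Ioc 0 x :=
      fun u hu => ⟨ne_of_gt (hμpos u hu.1), hu⟩
    calc (0:ℝ≥0∞) < volume (Ioc (0:ℝ) x) := by
          rw [Real.volume_Ioc]; exact ENNReal.ofReal_pos.mpr (by linarith)
      _ ≤ _ := measure_mono hsub
  set U : ℝ := Ufun13 μ x with hUdef
  set Ud : ℝ := U ^ δ with hUddef
  have hUd : 0 < Ud := Real.rpow_pos_of_pos hU δ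
  have hk : 0 < k13 ρ α γ σ := k13_pos hα hρ hγ hγσ hσ
  have hk' : k13 ρ α γ σ ≠ 0 := ne_of_gt hk
  have hFi : IntegrableOn (F ρ α γ σ) (Ioi 0) := F_integrableOn hα hρ hγ hγσ hσ
  have haeF : 0 ≤ᵐ[volume.restrict (Ioi (0:ℝ))] F ρ α γ σ :=
    (ae_restrict_iff' measurableSet_Ioi).mpr (ae_of_all _ fun u hu => (F_pos hρ hγ hu).le)
  have hanti : ∀ {s t : ℝ}, 0 < s → s ≤ t → F ρ α γ σ t ≤ F ρ α γ σ s :=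
    fun hs hst => F_anti_le hα hρ hγ hσ hs hst
  have hanti' : ∀ {s t : ℝ}, 0 < s → s < t → F ρ α γ σ t < F ρ α γ σ s :=
    fun hs hst => F_anti hα hρ hγ hσ hs hst
  set W : ℕ → ℝ := fun n => ∑ j ∈ Finset.Icc 1 n, ν j with hWdef
  have hν1 : ∀ n : ℕ, 0 < ν (n+1) := fun n => hν _ (Nat.succ_le_succ n.zero_le)
  have hWsucc : ∀ n : ℕ, W (n+1) = W n + ν (n+1) := fun n =>
    Finset.sum_Icc_succ_top (Nat.succ_le_succ n.zero_le) ν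
  have hWnonneg : ∀ n, 0 ≤ W n := fun n =>
    Finset.sum_nonneg fun j hj => (hν j (Finset.mem_Icc.mp hj).1).le
  have hWmono : Monotone W := monotone_nat_of_le_succ fun n => by
    rw [hWsucc n]; linarith [hν1 n]
  have hWpos : ∀ n, 1 ≤ n → 0 < W n := fun n hn =>
    Finset.sum_pos (fun j hj => hν j (Finset.mem_Icc.mp hj).1)
      ⟨1, Finset.mem_Icc.mpr ⟨le_rfl, hn⟩⟩
  have hWν : ∀ n, 1 ≤ n → ν n ≤ W n := fun n hn =>
    Finset.single_le_sum (f := ν) (fun j hj => (hν j (Finset.mem_Icc.mp hj).1).le)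
      (Finset.mem_Icc.mpr ⟨hn, le_rfl⟩)
  have hVW : ∀ n, 1 ≤ n → W n - ν n / 2 ≤ Vt n ∧ Vt n ≤ W n := fun n hn => hVt n hn
  have hVpos : ∀ n, 1 ≤ n → 0 < Vt n := fun n hn => by
    have h1 := (hVW n hn).1
    have h2 := hWν n hn
    have h3 := hν n hn
    linarith
  set b : ℝ := Ud * W n₀ with hbdef
  have hbpos : 0 < b := mul_pos hUd (hWpos n₀ hn₀)
  set T : ℕ → ℝ := fun n => h13 ρ α γ (Ud * Vt (n + 1))
    * (U ^ (δ * σ) * ν (n + 1) / Vt (n + 1) ^ (1 - σ)) with hTdef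
  have hTt : ∀ n : ℕ, T n = F ρ α γ σ (Ud * Vt (n+1)) * (Ud * ν (n+1)) := fun n =>
    (term_eq hU (hVpos (n+1) (Nat.succ_le_succ n.zero_le)) δ).symm
  have hTpos : ∀ n, 0 < T n := fun n => by
    rw [hTt n]
    exact mul_pos (F_pos hρ hγ (mul_pos hUd (hVpos (n+1) (Nat.succ_le_succ n.zero_le))))
      (mul_pos hUd (hν1 n))
  -- per-interval upper estimates
  have claim1 : ∀ m : ℕ, n₀ ≤ m → (∫ u in Ioc (Ud * W m) (Ud * W (m+1)), F ρ α γ σ u)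
      ≤ F ρ α γ σ (Ud * Vt m) * (Ud * ν m) := by
    intro m hm
    have hm1 : 1 ≤ m := le_trans hn₀ hm
    have hc : 0 < Ud * Vt m := mul_pos hUd (hVpos m hm1)
    have hca : Ud * Vt m ≤ Ud * W m := mul_le_mul_of_nonneg_left (hVW m hm1).2 hUd.le
    have hab : Ud * W m ≤ Ud * W (m+1) :=
      mul_le_mul_of_nonneg_left (hWmono (Nat.le_succ m)) hUd.le
    have h1 := int_Ioc_le hFi hanti hc hca hab
    have h2 : Ud * W (m+1) - Ud * W m = Ud * ν (m+1) := by rw [hWsucc m]; ring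
    rw [h2] at h1
    refine h1.trans ?_
    exact mul_le_mul_of_nonneg_left
      (mul_le_mul_of_nonneg_left (hmono m hm) hUd.le) (F_pos hρ hγ hc).le
  have claim1s : (∫ u in Ioc (Ud * W n₀) (Ud * W (n₀+1)), F ρ α γ σ u)
      < F ρ α γ σ (Ud * Vt n₀) * (Ud * ν n₀) := by
    have hc : 0 < Ud * Vt n₀ := mul_pos hUd (hVpos n₀ hn₀)
    have hca : Ud * Vt n₀ ≤ Ud * W n₀ := mul_le_mul_of_nonneg_left (hVW n₀ hn₀).2 hUd.le
    have hab : Ud * W n₀ < Ud * W (n₀+1) := by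
      have := hν1 n₀
      have := hWsucc n₀
      nlinarith
    have h1 := int_Ioc_lt hFi hanti hanti' hc hca hab
    have h2 : Ud * W (n₀+1) - Ud * W n₀ = Ud * ν (n₀+1) := by rw [hWsucc n₀]; ring
    rw [h2] at h1
    refine h1.trans_le ?_
    exact mul_le_mul_of_nonneg_left
      (mul_le_mul_of_nonneg_left (hmono n₀ le_rfl) hUd.le) (F_pos hρ hγ hc).le
  -- per-interval lower estimate, for summability
  have claim2 : ∀ k : ℕ, F ρ α γ σ (Ud * Vt (k+1)) * (Ud * ν (k+1))
      ≤ 2 * ∫ u in Ioc (Ud * W k) (Ud * W (k+1)), F ρ α γ σ u := by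
    intro k
    have hk1 : 1 ≤ k + 1 := Nat.succ_le_succ k.zero_le
    have hc : 0 < Ud * Vt (k+1) := mul_pos hUd (hVpos _ hk1)
    have ha : 0 ≤ Ud * W k := mul_nonneg hUd.le (hWnonneg k)
    set mid : ℝ := Ud * (W k + ν (k+1) / 2) with hmid
    have hamid : Ud * W k ≤ mid := by
      rw [hmid]; nlinarith [hν1 k]
    have hmidc : mid ≤ Ud * Vt (k+1) := by
      have h1 := (hVW (k+1) hk1).1
      have h2 := hWsucc k
      rw [hmid]
      refine mul_le_mul_of_nonneg_left (by linarith) hUd.le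
    have h1 := int_Ioc_ge hFi hanti ha hamid hmidc
    have h2 : mid - Ud * W k = Ud * (ν (k+1) / 2) := by rw [hmid]; ring
    have hmidb : mid ≤ Ud * W (k+1) := by
      have h3 := hWsucc k
      rw [hmid]
      refine mul_le_mul_of_nonneg_left (by nlinarith [hν1 k]) hUd.le
    have h3 : (∫ u in Ioc (Ud * W k) mid, F ρ α γ σ u)
        ≤ ∫ u in Ioc (Ud * W k) (Ud * W (k+1)), F ρ α γ σ u := by
      rw [int_Ioc_split hFi ha hamid hmidb]
      have h4 : 0 ≤ ∫ u in Ioc mid (Ud * W (k+1)), F ρ α γ σ u :=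
        setIntegral_nonneg measurableSet_Ioc fun t ht =>
          (F_pos hρ hγ (lt_of_le_of_lt (ha.trans hamid) ht.1)).le
      linarith
    rw [h2] at h1
    have h5 : F ρ α γ σ (Ud * Vt (k+1)) * (Ud * ν (k+1))
        = 2 * (F ρ α γ σ (Ud * Vt (k+1)) * (Ud * (ν (k+1) / 2))) := by ring
    linarith [h1.trans h3]
  -- telescoping sums of interval integrals
  have htel : ∀ k M : ℕ, ∑ i ∈ Finset.range M,
      (∫ u in Ioc (Ud * W (k+i)) (Ud * W (k+i+1)), F ρ α γ σ u)
      = ∫ u in Ioc (Ud * W k) (Ud * W (k+M)), F ρ α γ σ u := by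
    intro k M
    induction M with
    | zero => simp
    | succ M ih =>
      rw [Finset.sum_range_succ, ih, show k + (M+1) = k + M + 1 by omega,
        ← int_Ioc_split hFi (mul_nonneg hUd.le (hWnonneg k))
          (mul_le_mul_of_nonneg_left (hWmono (by omega : k ≤ k + M)) hUd.le)
          (mul_le_mul_of_nonneg_left (hWmono (by omega : k + M ≤ k + M + 1)) hUd.le)]
  -- summability
  have hsum : Summable T := by
    refine summable_of_sum_range_le (c := 2 * ∫ u in Ioi (0:ℝ), F ρ α γ σ u)
      (fun n => (hTpos n).le) fun N => ?_
    have hW0 : W 0 = 0 := by simp [hWdef]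
    calc ∑ i ∈ Finset.range N, T i
        ≤ ∑ i ∈ Finset.range N, 2 * ∫ u in Ioc (Ud * W i) (Ud * W (i+1)), F ρ α γ σ u := by
          refine Finset.sum_le_sum fun i _ => ?_
          rw [hTt i]
          exact claim2 i
      _ = 2 * ∫ u in Ioc (Ud * W 0) (Ud * W N), F ρ α γ σ u := by
          rw [← Finset.mul_sum]
          congr 1
          have := htel 0 N
          simpa using this
      _ ≤ 2 * ∫ u in Ioi (0:ℝ), F ρ α γ σ u := by
          have hsub : Ioc (Ud * W 0) (Ud * W N) ⊆ Ioi (0:ℝ) := by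
            rw [hW0, mul_zero]; exact Ioc_subset_Ioi_self
          have h5 := setIntegral_mono_set hFi haeF (HasSubset.Subset.eventuallyLE hsub)
          linarith
  -- the value of k(σ)(1-θ)
  have hθval : θ13 μ ρ α γ σ δ (∑ j ∈ Finset.Icc 1 n₀, ν j) x
      = 1 / k13 ρ α γ σ * ∫ u in Ioc (0:ℝ) b, F ρ α γ σ u := by
    unfold θ13
    rw [show (Ufun13 μ x ^ δ * ∑ j ∈ Finset.Icc 1 n₀, ν j) = b from rfl,
      ← integral_Ioc_eq_integral_Ioo]
    rfl
  have hθ_eq : k13 ρ α γ σ * (1 - θ13 μ ρ α γ σ δ (∑ j ∈ Finset.Icc 1 n₀, ν j) x)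
      = ∫ u in Ioi b, F ρ α γ σ u := by
    have hsplit := int_Ioi_split hFi (le_refl (0:ℝ)) hbpos.le
    rw [hθval, mul_sub, mul_one, ← mul_assoc, mul_one_div_cancel hk', one_mul, k13_eq]
    linarith
  -- main inequality
  have main : (∫ u in Ioi b, F ρ α γ σ u) < ∑' n, T n := by
    set b1 : ℝ := Ud * W (n₀ + 1) with hb1def
    have hbb1 : b ≤ b1 := mul_le_mul_of_nonneg_left (hWmono (Nat.le_succ n₀)) hUd.le
    have hs1 : (∫ u in Ioi b, F ρ α γ σ u)
        = (∫ u in Ioc b b1, F ρ α γ σ u) + ∫ u in Ioi b1, F ρ α γ σ u :=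
      int_Ioi_split hFi hbpos.le hbb1
    have hsum' : Summable fun n => T (n + n₀) := (summable_nat_add_iff n₀).mpr hsum
    have htail : (∫ u in Ioi b1, F ρ α γ σ u) ≤ ∑' n, T (n + n₀) := by
      have hmono_s : Monotone fun N : ℕ => Ud * W (N + (n₀+1)) := fun m n hmn =>
        mul_le_mul_of_nonneg_left (hWmono (by omega)) hUd.le
      have htend : Tendsto (fun N : ℕ => Ud * W (N + (n₀+1))) atTop atTop := by
        have h1 : Tendsto (fun N : ℕ => W (N + (n₀+1))) atTop atTop :=
          hdiv.comp (tendsto_add_atTop_nat (n₀+1))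
        exact h1.const_mul_atTop hUd
      have hlim := tendsto_setInt (f := F ρ α γ σ) (a := b1) hmono_s htend
        (hFi.mono_set (fun t ht => lt_of_lt_of_le hbpos (hbb1.trans (le_of_lt ht))))
      refine le_of_tendsto hlim (Eventually.of_forall fun N => ?_)
      calc (∫ u in Ioc b1 (Ud * W (N + (n₀+1))), F ρ α γ σ u)
          = ∑ i ∈ Finset.range N,
            (∫ u in Ioc (Ud * W ((n₀+1)+i)) (Ud * W ((n₀+1)+i+1)), F ρ α γ σ u) := by
            rw [htel (n₀+1) N, show (n₀+1) + N = N + (n₀+1) by omega]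
        _ ≤ ∑ i ∈ Finset.range N, T (i + n₀) := by
            refine Finset.sum_le_sum fun i _ => ?_
            have h6 := claim1 ((n₀+1)+i) (by omega)
            have h7 : T (i + n₀) = F ρ α γ σ (Ud * Vt ((n₀+1)+i)) * (Ud * ν ((n₀+1)+i)) := by
              rw [hTt (i + n₀), show i + n₀ + 1 = (n₀+1)+i by omega]
            rw [h7]
            exact h6
        _ ≤ ∑' n, T (n + n₀) :=
            Summable.sum_le_tsum _ (fun i _ => (hTpos _).le) hsum'
    have hfin : F ρ α γ σ (Ud * Vt n₀) * (Ud * ν n₀) + (∑' n, T (n + n₀)) ≤ ∑' n, T n := by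
      rw [← Summable.sum_add_tsum_nat_add n₀ hsum]
      have hn' : n₀ - 1 + 1 = n₀ := Nat.succ_pred_eq_of_pos hn₀
      have h6 : F ρ α γ σ (Ud * Vt n₀) * (Ud * ν n₀) = T (n₀ - 1) := by
        rw [hTt (n₀ - 1), hn']
      rw [h6]
      have h8 := Finset.single_le_sum (f := T) (fun i _ => (hTpos i).le)
        (Finset.mem_range.mpr (by omega : n₀ - 1 < n₀))
      linarith
    calc (∫ u in Ioi b, F ρ α γ σ u)
        = (∫ u in Ioc b b1, F ρ α γ σ u) + ∫ u in Ioi b1, F ρ α γ σ u := hs1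
      _ < F ρ α γ σ (Ud * Vt n₀) * (Ud * ν n₀) + ∑' n, T (n + n₀) :=
          add_lt_add_of_lt_of_le claim1s htail
      _ ≤ ∑' n, T n := hfin
  -- θ positivity
  have hIθpos : 0 < ∫ u in Ioo (0:ℝ) b, F ρ α γ σ u := by
    have hae2 : 0 ≤ᵐ[volume.restrict (Ioo (0:ℝ) b)] F ρ α γ σ :=
      (ae_restrict_iff' measurableSet_Ioo).mpr (ae_of_all _ fun u hu => (F_pos hρ hγ hu.1).le)
    refine (setIntegral_pos_iff_support_of_nonneg_ae hae2
      (hFi.mono_set (fun t ht => ht.1))).mpr ?_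
    have hsub : Ioo (0:ℝ) b ⊆ Function.support (F ρ α γ σ) ∩ Ioo 0 b :=
      fun u hu => ⟨ne_of_gt (F_pos hρ hγ hu.1), hu⟩
    calc (0:ℝ≥0∞) < volume (Ioo (0:ℝ) b) := by
          rw [Real.volume_Ioo]; exact ENNReal.ofReal_pos.mpr (by linarith)
      _ ≤ _ := measure_mono hsub
  have hθpos : 0 < θ13 μ ρ α γ σ δ (∑ j ∈ Finset.Icc 1 n₀, ν j) x := by
    rw [hθval, ← integral_Ioc_eq_integral_Ioo] at *
    exact mul_pos (by positivity) hIθpos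
  -- θ upper bound
  have hIθle : (∫ u in Ioo (0:ℝ) b, F ρ α γ σ u) ≤ ρ⁻¹ * (b ^ (σ - γ) / (σ - γ)) := by
    have hg : IntegrableOn (fun u : ℝ => ρ⁻¹ * u ^ (σ - γ - 1)) (Ioo (0:ℝ) b) := by
      have h1 := intervalIntegral.intervalIntegrable_rpow' (a := 0) (b := b)
        (r := σ - γ - 1) (by linarith)
      have h2 : IntegrableOn (fun u : ℝ => ρ⁻¹ * u ^ (σ - γ - 1)) (Ioc (0:ℝ) b) :=
        ((intervalIntegrable_iff_integrableOn_Ioc_of_le hbpos.le).mp h1).const_mul _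
      exact h2.mono_set Ioo_subset_Ioc_self
    have h1 := setIntegral_mono_on (hFi.mono_set (fun t ht => ht.1)) hg measurableSet_Ioo
      (fun t ht => F_le hα hρ hγ ht.1)
    have h2 : (∫ u in Ioo (0:ℝ) b, ρ⁻¹ * u ^ (σ - γ - 1))
        = ρ⁻¹ * (b ^ (σ - γ) / (σ - γ)) := by
      rw [integral_const_mul, int_rpow_Ioo hbpos.le (by linarith),
        show σ - γ - 1 + 1 = σ - γ by ring]
    linarith
  have hθle : θ13 μ ρ α γ σ δ (∑ j ∈ Finset.Icc 1 n₀, ν j) x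
      ≤ ρ⁻¹ * b ^ (σ - γ) / (k13 ρ α γ σ * (σ - γ)) := by
    have h1 : θ13 μ ρ α γ σ δ (∑ j ∈ Finset.Icc 1 n₀, ν j) x
        ≤ 1 / k13 ρ α γ σ * (ρ⁻¹ * (b ^ (σ - γ) / (σ - γ))) := by
      rw [hθval, ← integral_Ioc_eq_integral_Ioo] at *
      exact mul_le_mul_of_nonneg_left hIθle (by positivity)
    refine h1.trans_eq ?_
    rw [div_eq_mul_inv, div_eq_mul_inv, div_eq_mul_inv, mul_inv]
    ring
  refine ⟨?_, hθpos, ?_⟩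
  · rw [hθ_eq]
    exact main
  · exact hθle
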